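/- Let F be a field, k < n, and suppose k divides δ; set m = δ/k and L = δ/k + ⌊δ/(n-k)⌋. Let G(z) = Σ_{i=0}^{m} G_i z^i ∈ F[z]^{k×n}, and let G_L^c ∈ F^{(L+1)k×(L+1)n} be the upper block-triangular sliding matrix with (a,b)-block G_{b-a} for 0 ≤ a ≤ b ≤ L (zero for b-a > m or b < a). If every full-size minor of G_L^c formed by columns t_1 < ... < t_{(L+1)k} with t_{sk+1} > sn for s = 1,...,L is nonzero, then G(z) is left prime (and hence is the generator matrix of a noncatastrophic convolutional code). -/

import Mathlib

open Polynomial Matrix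

/-- A polynomial matrix `G` is left prime if in every factorization `G = M * G'`
with `M` square polynomial, the left factor `M` is unimodular (a unit). -/
def IsLeftPrimeMat {F : Type*} [Field F] {p q : ℕ}
    (G : Matrix (Fin p) (Fin q) (Polynomial F)) : Prop :=
  ∀ (M : Matrix (Fin p) (Fin p) (Polynomial F))
    (G' : Matrix (Fin p) (Fin q) (Polynomial F)),
    G = M * G' → IsUnit M

/-- If `k ∣ δ`, `m = δ/k`, `L = δ/k + ⌊δ/(n-k)⌋`, and every non-trivially-zero
full-size minor of the `L`-th truncated sliding generator matrix `G_L^c`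
(column indices `t_1 < … < t_{(L+1)k}` with `t_{sk+1} > sn` for `s = 1, …, L`)
is nonzero, then `G(z)` is left prime (hence generates a noncatastrophic code). -/
theorem stmt14 {F : Type*} [Field F] (n k δ m L : ℕ) (hk0 : 0 < k) (hk : k < n)
    (hδ : 0 < δ) (hdvd : k ∣ δ) (hm : m = δ / k)
    (hL : L = δ / k + δ / (n - k))
    (G : ℕ → Matrix (Fin k) (Fin n) F)
    (hGm : ∀ s, m < s → G s = 0)
    (Gc : Matrix (Fin ((L + 1) * k)) (Fin ((L + 1) * n)) F)
    (hGc : ∀ (i : Fin ((L + 1) * k)) (j : Fin ((L + 1) * n)),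
      Gc i j =
        if (i : ℕ) / k ≤ (j : ℕ) / n then
          G ((j : ℕ) / n - (i : ℕ) / k)
            ⟨(i : ℕ) % k, Nat.mod_lt _ (by omega)⟩
            ⟨(j : ℕ) % n, Nat.mod_lt _ (by omega)⟩
        else 0)
    (hminors : ∀ t : Fin ((L + 1) * k) → Fin ((L + 1) * n),
      StrictMono t →
      (∀ s, 1 ≤ s → s ≤ L →
        ∀ i : Fin ((L + 1) * k), (i : ℕ) = s * k → s * n ≤ (t i : ℕ)) →
      (Gc.submatrix id t).det ≠ 0) :
    ∀ GP : Matrix (Fin k) (Fin n) (Polynomial F),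
      (∀ a b, GP a b = ∑ s ∈ Finset.range (m + 1), Polynomial.C (G s a b) * Polynomial.X ^ s) →
      IsLeftPrimeMat GP := by
  intro GP hGP
  have hn0 : 0 < n := by omega
  have hd0 : 0 < n - k := by omega
  set r : ℕ := δ / (n - k) with hrdef
  have hLmr : L = m + r := by rw [hL, ← hm]
  have hδm : δ = m * k := by rw [hm, Nat.div_mul_cancel hdvd]
  have hrle : r * (n - k) ≤ δ := Nat.div_mul_le_self δ (n - k)
  have hrlt : δ < (r + 1) * (n - k) := by
    have h1 := Nat.div_add_mod δ (n - k)
    have h2 : δ % (n - k) < n - k := Nat.mod_lt _ hd0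
    calc δ = (n - k) * r + δ % (n - k) := h1.symm
    _ < (n - k) * r + (n - k) := Nat.add_lt_add_left h2 _
    _ = (r + 1) * (n - k) := by ring
  have hmul1 : (L + 1) * n = (L + 1) * k + (L + 1) * (n - k) := by
    calc (L + 1) * n = (L + 1) * (k + (n - k)) := by rw [show k + (n - k) = n from by omega]
    _ = (L + 1) * k + (L + 1) * (n - k) := Nat.mul_add _ _ _
  have hmul2 : m * n = m * k + m * (n - k) := by
    calc m * n = m * (k + (n - k)) := by rw [show k + (n - k) = n from by omega]
    _ = m * k + m * (n - k) := Nat.mul_add _ _ _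
  have hmul3 : (L + 1) * (n - k) = m * (n - k) + (r + 1) * (n - k) := by
    calc (L + 1) * (n - k) = (m + (r + 1)) * (n - k) := by rw [show L + 1 = m + (r + 1) from by omega]
    _ = m * (n - k) + (r + 1) * (n - k) := Nat.add_mul _ _ _
  have A1 : m * n + (L + 1) * k ≤ (L + 1) * n := by
    rw [hmul1, hmul3, hmul2]; linarith [hrlt, hδm]
  have A2 : ∀ s : ℕ, s ≤ L → s * n ≤ m * n + s * k := by
    intro s hs
    have h4 : s * n = s * k + s * (n - k) := by
      calc s * n = s * (k + (n - k)) := by rw [show k + (n - k) = n from by omega]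
      _ = s * k + s * (n - k) := Nat.mul_add _ _ _
    have h5 : s * (n - k) ≤ L * (n - k) := Nat.mul_le_mul_right _ hs
    have h6 : L * (n - k) = m * (n - k) + r * (n - k) := by
      calc L * (n - k) = (m + r) * (n - k) := by rw [← hLmr]
      _ = m * (n - k) + r * (n - k) := Nat.add_mul _ _ _
    linarith [hrle, hδm, hmul2]
  have htlt : ∀ i : Fin ((L + 1) * k), m * n + (i : ℕ) < (L + 1) * n := fun i =>
    lt_of_lt_of_le (Nat.add_lt_add_left i.isLt _) A1
  have hmono : StrictMono (fun i : Fin ((L + 1) * k) =>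
      (⟨m * n + (i : ℕ), htlt i⟩ : Fin ((L + 1) * n))) := by
    intro i j hij
    simp only [Fin.mk_lt_mk]
    exact Nat.add_lt_add_left hij _
  have hcond : ∀ s, 1 ≤ s → s ≤ L → ∀ i : Fin ((L + 1) * k), (i : ℕ) = s * k →
      s * n ≤ (((fun i : Fin ((L + 1) * k) => (⟨m * n + (i : ℕ), htlt i⟩ : Fin ((L + 1) * n))) i : ℕ)) := by
    intro s _ hsL i hi
    show s * n ≤ m * n + (i : ℕ)
    rw [hi]; exact A2 s hsL
  have hdet : (Gc.submatrix id (fun i : Fin ((L + 1) * k) =>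
      (⟨m * n + (i : ℕ), htlt i⟩ : Fin ((L + 1) * n)))).det ≠ 0 := hminors _ hmono hcond
  set B := Gc.submatrix id (fun i : Fin ((L + 1) * k) =>
      (⟨m * n + (i : ℕ), htlt i⟩ : Fin ((L + 1) * n))) with hBdef
  have hBu : IsUnit B.det := isUnit_iff_ne_zero.mpr hdet
  have hBinv : B * B⁻¹ = 1 := Matrix.mul_nonsing_inv B hBu
  set E : Matrix (Fin ((L + 1) * k)) (Fin k) F :=
    Matrix.of (fun i α => if (i : ℕ) = L * k + (α : ℕ) then (1 : F) else 0) with hEdef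
  set Xm : Matrix (Fin ((L + 1) * k)) (Fin k) F := B⁻¹ * E with hXdef
  have hBX : B * Xm = E := by rw [hXdef, ← Matrix.mul_assoc, hBinv, Matrix.one_mul]
  have hmodn : ∀ x : ℕ, x % n < n := fun x => Nat.mod_lt _ hn0
  set R : Matrix (Fin n) (Fin k) (Polynomial F) := Matrix.of (fun β α =>
    ∑ i' : Fin ((L + 1) * k), if (m * n + (i' : ℕ)) % n = (β : ℕ) then
      C (Xm i' α) * X ^ (L - (m * n + (i' : ℕ)) / n) else 0) with hRdef
  have keylem : ∀ b : ℕ, m ≤ b → b ≤ L → ∀ (c : ℕ → F) (x : F), (∀ s, m < s → c s = 0) →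
      (∑ s ∈ Finset.range (m + 1), C (c s * x) * X ^ (s + (L - b)))
        = ∑ w ∈ Finset.range (L + 1),
            C ((if L - w ≤ b then c (b - (L - w)) else 0) * x) * X ^ w := by
    intro b hb1 hb2 c x hc
    have e1 : (∑ s ∈ Finset.range (m + 1), C (c s * x) * X ^ (s + (L - b)))
        = ∑ s ∈ Finset.range (b + 1), C (c s * x) * X ^ (s + (L - b)) := by
      apply Finset.sum_subset (Finset.range_subset_range.mpr (by omega))
      intro s _ hns
      have hms : m < s := by
        rw [Finset.mem_range] at hns; omega
      rw [hc s hms, zero_mul, map_zero, zero_mul]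
    have e2 : (∑ w ∈ Finset.Ico (L - b) (L + 1),
          C ((if L - w ≤ b then c (b - (L - w)) else 0) * x) * X ^ w)
        = ∑ w ∈ Finset.range (L + 1),
            C ((if L - w ≤ b then c (b - (L - w)) else 0) * x) * X ^ w := by
      apply Finset.sum_subset
      · intro w hw; rw [Finset.mem_Ico] at hw; rw [Finset.mem_range]; omega
      · intro w hw hnw
        rw [Finset.mem_range] at hw; rw [Finset.mem_Ico] at hnw
        have hno : ¬(L - w ≤ b) := by omega
        rw [if_neg hno, zero_mul, map_zero, zero_mul]
    rw [e1, ← e2, Finset.sum_Ico_eq_sum_range,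
      show L + 1 - (L - b) = b + 1 from by omega]
    apply Finset.sum_congr rfl
    intro s hs
    rw [Finset.mem_range] at hs
    rw [if_pos (show L - (L - b + s) ≤ b from by omega),
      show b - (L - (L - b + s)) = s from by omega,
      show L - b + s = s + (L - b) from by omega]
  have hbfacts : ∀ i' : Fin ((L + 1) * k),
      m ≤ (m * n + (i' : ℕ)) / n ∧ (m * n + (i' : ℕ)) / n ≤ L := by
    intro i'
    constructor
    · exact (Nat.le_div_iff_mul_le hn0).mpr (Nat.le_add_right _ _)
    · have h := (Nat.div_lt_iff_lt_mul hn0).mpr (htlt i')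
      omega
  have hdivk : ∀ (q : ℕ) (a : Fin k), (q * k + (a : ℕ)) / k = q := by
    intro q a
    rw [add_comm, mul_comm q k, Nat.add_mul_div_left _ _ hk0,
      Nat.div_eq_of_lt a.isLt, zero_add]
  have hmodk : ∀ (q : ℕ) (a : Fin k), (q * k + (a : ℕ)) % k = (a : ℕ) := by
    intro q a
    rw [add_comm, mul_comm q k, Nat.add_mul_mod_self_left, Nat.mod_eq_of_lt a.isLt]
  have hiw : ∀ (w : ℕ) (a : Fin k), (L - w) * k + (a : ℕ) < (L + 1) * k := by
    intro w a
    have h1 : (L - w + 1) * k ≤ (L + 1) * k := Nat.mul_le_mul_right _ (by omega)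
    have h2 : (L - w) * k + k = (L - w + 1) * k := by ring
    have h3 := a.isLt
    linarith
  have hBentry : ∀ (w : ℕ), w ≤ L → ∀ (a' : Fin k) (i' : Fin ((L + 1) * k)),
      B ⟨(L - w) * k + (a' : ℕ), hiw w a'⟩ i'
        = if L - w ≤ (m * n + (i' : ℕ)) / n then
            G ((m * n + (i' : ℕ)) / n - (L - w)) a' ⟨(m * n + (i' : ℕ)) % n, hmodn _⟩ else 0 := by
    intro w hw a' i'
    rw [hBdef, Matrix.submatrix_apply, hGc]
    simp only [id_eq]
    rw [hdivk (L - w) a']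
    simp only [hmodk (L - w) a', Fin.eta]
  have hGR : GP * R = 1 := by
    refine Matrix.ext fun a' a => ?_
    rw [Matrix.mul_apply]
    calc ∑ β : Fin n, GP a' β * R β a
        = ∑ β : Fin n, ∑ i' : Fin ((L + 1) * k),
            (if (m * n + (i' : ℕ)) % n = (β : ℕ) then
              GP a' β * (C (Xm i' a) * X ^ (L - (m * n + (i' : ℕ)) / n)) else 0) := by
          refine Finset.sum_congr rfl fun β _ => ?_
          rw [hRdef, Matrix.of_apply, Finset.mul_sum]
          refine Finset.sum_congr rfl fun i' _ => ?_
          rw [mul_ite, mul_zero]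
      _ = ∑ i' : Fin ((L + 1) * k), ∑ β : Fin n,
            (if (m * n + (i' : ℕ)) % n = (β : ℕ) then
              GP a' β * (C (Xm i' a) * X ^ (L - (m * n + (i' : ℕ)) / n)) else 0) :=
          Finset.sum_comm
      _ = ∑ i' : Fin ((L + 1) * k),
            GP a' ⟨(m * n + (i' : ℕ)) % n, hmodn _⟩ *
              (C (Xm i' a) * X ^ (L - (m * n + (i' : ℕ)) / n)) := by
          refine Finset.sum_congr rfl fun i' _ => ?_
          rw [Finset.sum_eq_single (⟨(m * n + (i' : ℕ)) % n, hmodn _⟩ : Fin n)]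
          · rw [if_pos rfl]
          · intro β _ hβ
            rw [if_neg]
            intro h
            exact hβ (Fin.ext h.symm)
          · intro h; exact absurd (Finset.mem_univ _) h
      _ = ∑ i' : Fin ((L + 1) * k), ∑ s ∈ Finset.range (m + 1),
            C (G s a' ⟨(m * n + (i' : ℕ)) % n, hmodn _⟩ * Xm i' a) *
              X ^ (s + (L - (m * n + (i' : ℕ)) / n)) := by
          refine Finset.sum_congr rfl fun i' _ => ?_
          rw [hGP, Finset.sum_mul]
          refine Finset.sum_congr rfl fun s _ => ?_
          rw [C_mul]
          ring
      _ = ∑ i' : Fin ((L + 1) * k), ∑ w ∈ Finset.range (L + 1),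
            C ((if L - w ≤ (m * n + (i' : ℕ)) / n then
                G ((m * n + (i' : ℕ)) / n - (L - w)) a' ⟨(m * n + (i' : ℕ)) % n, hmodn _⟩
              else 0) * Xm i' a) * X ^ w := by
          refine Finset.sum_congr rfl fun i' _ => ?_
          exact keylem _ (hbfacts i').1 (hbfacts i').2
            (fun s => G s a' ⟨(m * n + (i' : ℕ)) % n, hmodn _⟩) (Xm i' a)
            (fun s hs => by simp [hGm s hs])
      _ = ∑ w ∈ Finset.range (L + 1), ∑ i' : Fin ((L + 1) * k),
            C ((if L - w ≤ (m * n + (i' : ℕ)) / n then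
                G ((m * n + (i' : ℕ)) / n - (L - w)) a' ⟨(m * n + (i' : ℕ)) % n, hmodn _⟩
              else 0) * Xm i' a) * X ^ w := Finset.sum_comm
      _ = ∑ w ∈ Finset.range (L + 1),
            C ((B * Xm) ⟨(L - w) * k + (a' : ℕ), hiw w a'⟩ a) * X ^ w := by
          refine Finset.sum_congr rfl fun w hw => ?_
          rw [Finset.mem_range] at hw
          rw [Matrix.mul_apply, map_sum, Finset.sum_mul]
          refine Finset.sum_congr rfl fun i' _ => ?_
          rw [hBentry w (by omega) a' i']
      _ = (1 : Matrix (Fin k) (Fin k) (Polynomial F)) a' a := by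
          rw [hBX]
          have hterm : ∀ w ∈ Finset.range (L + 1),
              C (E ⟨(L - w) * k + (a' : ℕ), hiw w a'⟩ a) * X ^ w
                = if w = 0 then (if a' = a then (1 : Polynomial F) else 0) else 0 := by
            intro w hw
            rw [Finset.mem_range] at hw
            rw [hEdef, Matrix.of_apply]
            by_cases hw0 : w = 0
            · subst hw0
              by_cases ha : a' = a
              · subst ha
                rw [if_pos (show ((L - 0) * k + (a' : ℕ) : ℕ) = L * k + (a' : ℕ) from by
                    rw [Nat.sub_zero]),
                  C_1, pow_zero, mul_one, if_pos rfl, if_pos rfl]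
              · have hne : ¬(((L - 0) * k + (a' : ℕ) : ℕ) = L * k + (a : ℕ)) := by
                  rw [Nat.sub_zero]
                  intro h
                  exact ha (Fin.ext (by omega))
                rw [if_neg hne, map_zero, zero_mul, if_pos rfl, if_neg ha]
            · have h1 : (L - w + 1) * k ≤ L * k := Nat.mul_le_mul_right _ (by omega)
              have h2 : (L - w) * k + k = (L - w + 1) * k := by ring
              have h3 : ¬(((L - w) * k + (a' : ℕ) : ℕ) = L * k + (a : ℕ)) := by
                intro h
                have h4 := a'.isLt
                linarith
              rw [if_neg h3, map_zero, zero_mul, if_neg hw0]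
          rw [Finset.sum_congr rfl hterm, Finset.sum_ite_eq' (Finset.range (L + 1)) 0
            (fun _ => if a' = a then (1 : Polynomial F) else 0),
            if_pos (Finset.mem_range.mpr (by omega)), Matrix.one_apply]
  intro M G' hMG
  have h1 : M * (G' * R) = 1 := by rw [← Matrix.mul_assoc, ← hMG, hGR]
  have h2 : IsUnit M.det := IsUnit.of_mul_eq_one _
    (by rw [← Matrix.det_mul, h1, Matrix.det_one])
  exact (Matrix.isUnit_iff_isUnit_det M).mpr h2
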